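/- The transformation r5 of the quantum Garnier system G(1,1,1,1,1) is a quantum canonical transformation: suppose y1 is a unit of R, and define q1 = −x1y1^2 − x2 + α5·y1 + 1, p1 = y1^{-1}, q2 = x2, p2 = y1^{-1} + y2. Then (q1, p1, q2, p2) again satisfy the canonical commutation relations: [q1,p1] = [q2,p2] = h and [q1,q2] = [p1,p2] = [q1,p2] = [q2,p1] = 0. -/
import Mathlib


/-- The transformation r5 of the quantum Garnier system G(1,1,1,1,1) is a quantum
canonical transformation. -/
theorem quantum_garnier_G11111_r5_canonical
    {R : Type*} [Ring R]
    (h α5 : R)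
    (hh : ∀ r : R, h * r = r * h)
    (hA5 : ∀ r : R, α5 * r = r * α5)
    (x1 y1 x2 y2 : R)
    (hx1y1 : x1 * y1 - y1 * x1 = h)
    (hx2y2 : x2 * y2 - y2 * x2 = h)
    (hx1x2 : x1 * x2 - x2 * x1 = 0)
    (hy1y2 : y1 * y2 - y2 * y1 = 0)
    (hx1y2 : x1 * y2 - y2 * x1 = 0)
    (hx2y1 : x2 * y1 - y1 * x2 = 0)
    (y1i : R) (hy1il : y1i * y1 = 1) (hy1ir : y1 * y1i = 1)
    (q1 p1 q2 p2 : R)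
    (hq1 : q1 = -(x1 * y1^2) - x2 + α5 * y1 + 1)
    (hp1 : p1 = y1i)
    (hq2 : q2 = x2)
    (hp2 : p2 = y1i + y2) :
    q1 * p1 - p1 * q1 = h ∧ q2 * p2 - p2 * q2 = h ∧
    q1 * q2 - q2 * q1 = 0 ∧ p1 * p2 - p2 * p1 = 0 ∧
    q1 * p2 - p2 * q1 = 0 ∧ q2 * p1 - p1 * q2 = 0 := by
  rw [hq1, hp1, hq2, hp2]
  have c3 : y1i * x2 = x2 * y1i := by
    linear_combination (norm := noncomm_ring)
      y1i * hx2y1 * y1i - y1i * x2 * hy1ir + hy1il * (x2 * y1i)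
  have c2 : y1i * y2 = y2 * y1i := by
    linear_combination (norm := noncomm_ring)
      - y1i * hy1y2 * y1i - y1i * y2 * hy1ir + hy1il * (y2 * y1i)
  refine ⟨?_, ?_, ?_, ?_, ?_, ?_⟩
  · linear_combination (norm := noncomm_ring)
      c3 + α5 * hy1ir + (hA5 y1i) * y1 - α5 * hy1il
      - x1 * y1 * hy1ir + y1i * hx1y1 * y1 + hy1il * (x1 * y1)
      - (hh y1i) * y1 + h * hy1il
  · linear_combination (norm := noncomm_ring) hx2y2 - c3
  · linear_combination (norm := noncomm_ring)
      - α5 * hx2y1 + (hA5 x2) * y1 + x1 * y1 * hx2y1 + x1 * hx2y1 * y1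
      - hx1x2 * (y1 * y1)
  · linear_combination (norm := noncomm_ring) c2
  · linear_combination (norm := noncomm_ring)
      c3 + α5 * hy1ir + (hA5 y1i) * y1 - α5 * hy1il
      - x1 * y1 * hy1ir + y1i * hx1y1 * y1 + hy1il * (x1 * y1)
      - (hh y1i) * y1 + h * hy1il
      - hx2y2 + α5 * hy1y2 + (hA5 y2) * y1
      - x1 * y1 * hy1y2 - x1 * hy1y2 * y1 - hx1y2 * (y1 * y1)
  · linear_combination (norm := noncomm_ring) - c3
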